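/- Let k be a field and R = k[x,y]. Fix integers 0 = a_0 < a_1 < ⋯ < a_r = d (r ≥ 1), set b_i = d − a_i, let I = ⟨x^{a_0}y^{b_0}, …, x^{a_r}y^{b_r}⟩ ⊆ R, and let S = ⟨a_0, …, a_r⟩ and T = ⟨b_0, …, b_r⟩ be the numerical semigroups generated by the exponents. Assume the nonzero a_i have gcd 1 and the nonzero b_i have gcd 1; let g(S) and g(T) be the Frobenius numbers of S and T (the integer such that every larger integer lies in the semigroup and which is not in the semigroup if nonnegative; equal to −1 when the semigroup is all of ℕ), and for a semigroup U ∈ {S, T} with largest generator c let Λ(U) = max{λ_U(u) : u ∈ U, u ≤ g(U) + c}, where λ_U(u) is the least total number of generators needed to represent u. Then for every integer l with l ≥ 2Λ(S) + 1 − (3 + 2g(S))/d and l ≥ 2Λ(T) + 1 − (3 + 2g(T))/d (inequalities of real numbers), I^l equals the ideal generated by all monomials x^s y^t with s ∈ S, t ∈ T, and s + t = d·l. -/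

import Mathlib

open MvPolynomial

noncomputable def lam {r : ℕ} (a : Fin r → ℕ) (s : ℕ) : ℕ :=
  sInf {n | ∃ c : Fin r → ℕ, (∑ i, c i) = n ∧ (∑ i, c i * a i) = s}

section Comb

variable {n : ℕ}

lemma mem_closure_iff_rep (a : Fin n → ℕ) (s : ℕ) :
    s ∈ AddSubmonoid.closure (Set.range a) ↔ ∃ c : Fin n → ℕ, (∑ i, c i * a i) = s := by
  constructor
  · intro hs
    induction hs using AddSubmonoid.closure_induction with
    | mem x hx =>
      obtain ⟨i, rfl⟩ := hx
      exact ⟨Pi.single i 1, by simp [Pi.single_apply]⟩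
    | zero => exact ⟨0, by simp⟩
    | add x y hx hy ihx ihy =>
      obtain ⟨c1, hc1⟩ := ihx
      obtain ⟨c2, hc2⟩ := ihy
      exact ⟨c1 + c2, by simp [add_mul, Finset.sum_add_distrib, hc1, hc2]⟩
  · rintro ⟨c, rfl⟩
    refine AddSubmonoid.sum_mem _ (fun i _ => ?_)
    have : c i * a i = c i • a i := by simp [smul_eq_mul]
    rw [this]
    exact AddSubmonoid.nsmul_mem _ (AddSubmonoid.subset_closure (Set.mem_range_self i)) (c i)

lemma lam_le (a : Fin n → ℕ) {s k : ℕ} (c : Fin n → ℕ)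
    (h1 : (∑ i, c i) = k) (h2 : (∑ i, c i * a i) = s) : lam a s ≤ k :=
  Nat.sInf_le ⟨c, h1, h2⟩

lemma lam_spec (a : Fin n → ℕ) {s : ℕ} (hs : s ∈ AddSubmonoid.closure (Set.range a)) :
    ∃ c : Fin n → ℕ, (∑ i, c i) = lam a s ∧ (∑ i, c i * a i) = s := by
  obtain ⟨c, hc⟩ := (mem_closure_iff_rep a s).1 hs
  have hne : {k | ∃ c : Fin n → ℕ, (∑ i, c i) = k ∧ (∑ i, c i * a i) = s}.Nonempty :=
    ⟨∑ i, c i, c, rfl, hc⟩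
  exact Nat.sInf_mem hne

lemma lam_le_self (a : Fin n → ℕ) {s : ℕ} (hs : s ∈ AddSubmonoid.closure (Set.range a)) :
    lam a s ≤ s := by
  obtain ⟨c, hc⟩ := (mem_closure_iff_rep a s).1 hs
  set c' : Fin n → ℕ := fun i => if a i = 0 then 0 else c i with hc'
  have h2 : (∑ i, c' i * a i) = s := by
    rw [← hc]
    refine Finset.sum_congr rfl (fun i _ => ?_)
    by_cases h : a i = 0 <;> simp [hc', h]
  calc lam a s ≤ ∑ i, c' i := lam_le a c' rfl h2
    _ ≤ ∑ i, c' i * a i := by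
        refine Finset.sum_le_sum (fun i _ => ?_)
        by_cases h : a i = 0
        · simp [hc', h]
        · exact Nat.le_mul_of_pos_right _ (Nat.pos_of_ne_zero h)
    _ = s := h2

variable (d : ℕ) (a : Fin n → ℕ) (gS : ℤ) (ΛS : ℕ)

lemma window (hgS_ge : -1 ≤ gS)
    (hΛS : ΛS = sSup {m | ∃ s : ℕ, s ∈ AddSubmonoid.closure (Set.range a) ∧
            (s : ℤ) ≤ gS + (d : ℤ) ∧ lam a s = m})
    {s : ℕ} (hs : s ∈ AddSubmonoid.closure (Set.range a)) (hle : (s : ℤ) ≤ gS + d) :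
    lam a s ≤ ΛS := by
  subst hΛS
  refine le_csSup ⟨(gS + d).toNat, ?_⟩ ⟨s, hs, hle, rfl⟩
  rintro m ⟨u, hu, hule, rfl⟩
  calc lam a u ≤ u := lam_le_self a hu
    _ = ((u : ℤ)).toNat := by simp
    _ ≤ (gS + d).toNat := Int.toNat_le_toNat hule

lemma lemA (hd : 0 < d) (hda : ∃ i, a i = d) (hgS_ge : -1 ≤ gS)
    (hgS_mem : ∀ m : ℕ, gS < (m : ℤ) → m ∈ AddSubmonoid.closure (Set.range a))
    (hΛS : ΛS = sSup {m | ∃ s : ℕ, s ∈ AddSubmonoid.closure (Set.range a) ∧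
            (s : ℤ) ≤ gS + (d : ℤ) ∧ lam a s = m}) :
    ∀ s : ℕ, s ∈ AddSubmonoid.closure (Set.range a) → gS < (s : ℤ) →
      (d : ℤ) * lam a s ≤ d * ΛS + s - gS - 1 := by
  intro s
  induction s using Nat.strong_induction_on with
  | _ s ih =>
    intro hs hgs
    by_cases hcase : (s : ℤ) ≤ gS + d
    · have h1 : (lam a s : ℤ) ≤ ΛS := by
        exact_mod_cast window d a gS ΛS hgS_ge hΛS hs hcase
      have hd' : (0 : ℤ) ≤ d := by positivity
      nlinarith
    · push_neg at hcase
      have hds : d ≤ s := by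
        have : (d : ℤ) ≤ (s : ℤ) := by linarith
        exact_mod_cast this
      have hcast : ((s - d : ℕ) : ℤ) = (s : ℤ) - d := by
        push_cast [Nat.cast_sub hds]; ring
      have hgs' : gS < ((s - d : ℕ) : ℤ) := by rw [hcast]; linarith
      have hs' : (s - d) ∈ AddSubmonoid.closure (Set.range a) := hgS_mem _ hgs'
      have hlt : s - d < s := Nat.sub_lt (lt_of_lt_of_le hd hds) hd
      have hkey : lam a s ≤ lam a (s - d) + 1 := by
        obtain ⟨c, hc1, hc2⟩ := lam_spec a hs'
        obtain ⟨i0, hi0⟩ := hda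
        refine lam_le a (c + (Pi.single i0 1 : Fin n → ℕ)) ?_ ?_
        · simp [Finset.sum_add_distrib, hc1]
        · have : (∑ i, (c + (Pi.single i0 1 : Fin n → ℕ)) i * a i)
              = (∑ i, c i * a i) + (∑ i, (Pi.single i0 1 : Fin n → ℕ) i * a i) := by
            simp [add_mul, Finset.sum_add_distrib]
          rw [this, hc2]
          have : (∑ i, (Pi.single i0 1 : Fin n → ℕ) i * a i) = a i0 := by
            simp [Pi.single_apply]
          rw [this, hi0]
          omega
      have hih := ih (s - d) hlt hs' hgs'
      have h2 : (lam a s : ℤ) ≤ (lam a (s - d) : ℤ) + 1 := by exact_mod_cast hkey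
      have hd' : (0 : ℤ) ≤ d := by positivity
      nlinarith [hih, h2, hcast]

end Comb
section Comb2

variable {n : ℕ} (d : ℕ) (a b : Fin n → ℕ) (gS gT : ℤ) (ΛS ΛT : ℕ)

lemma lemG (hd : 0 < d) (hab : ∀ i, a i + b i = d) (hdb : ∃ i, b i = d)
    (hgS_ge : -1 ≤ gS) (hgT_ge : -1 ≤ gT)
    (hgS_mem : ∀ m : ℕ, gS < (m : ℤ) → m ∈ AddSubmonoid.closure (Set.range a))
    (hgT_not : 0 ≤ gT → gT.toNat ∉ AddSubmonoid.closure (Set.range b))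
    (hΛS : ΛS = sSup {m | ∃ s : ℕ, s ∈ AddSubmonoid.closure (Set.range a) ∧
            (s : ℤ) ≤ gS + (d : ℤ) ∧ lam a s = m}) :
    gS + gT + d + 1 ≤ (d : ℤ) * ΛS := by
  have hdz : (d : ℤ) ≠ 0 := by positivity
  have hdpos : (0 : ℤ) < d := by positivity
  set r : ℤ := (-(gS + gT + 1)) % d with hr
  have hr0 : 0 ≤ r := Int.emod_nonneg _ hdz
  have hrd : r < d := Int.emod_lt_of_pos _ hdpos
  have hdvd : (d : ℤ) ∣ gS + gT + 1 + r := by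
    have h1 : (d : ℤ) ∣ (-(gS + gT + 1)) - r := Int.dvd_self_sub_of_emod_eq hr.symm
    have h2 : gS + gT + 1 + r = -((-(gS + gT + 1)) - r) := by ring
    rw [h2]
    exact dvd_neg.mpr h1
  by_cases hneg : gS + gT + 1 + r < 0
  · -- corner case : gS = gT = -1 and d = 1
    have hsum : gS + gT + 1 + r = -1 := by omega
    have hd1 : (d : ℤ) ∣ (1 : ℤ) := by
      have := hdvd
      rw [hsum] at this
      exact (dvd_neg.mp this)
    have : (d : ℤ) ≤ 1 := Int.le_of_dvd one_pos hd1
    have hΛ0 : (0 : ℤ) ≤ (d : ℤ) * ΛS := by positivity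
    omega
  · push_neg at hneg
    obtain ⟨q, hq⟩ := hdvd
    have hq0 : 0 ≤ q := by nlinarith
    set k₀ : ℕ := q.toNat with hk₀def
    have hk₀ : (d : ℤ) * k₀ = gS + gT + 1 + r := by
      rw [hk₀def, Int.toNat_of_nonneg hq0]; omega
    set u : ℕ := (gS + 1 + r).toNat with hudef
    have huz : (u : ℤ) = gS + 1 + r := by
      rw [hudef]; exact Int.toNat_of_nonneg (by linarith)
    have hu_mem : u ∈ AddSubmonoid.closure (Set.range a) := hgS_mem u (by rw [huz]; linarith)
    have hu_win : (u : ℤ) ≤ gS + d := by rw [huz]; linarith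
    have hdk : (d : ℤ) * k₀ = u + gT := by rw [huz]; linarith
    have hlam : k₀ + 1 ≤ lam a u := by
      by_contra hcon
      push_neg at hcon
      obtain ⟨c, hc1, hc2⟩ := lam_spec a hu_mem
      set k := lam a u with hkdef
      have hk : k ≤ k₀ := by omega
      have hsum : u + (∑ i, c i * b i) = d * k := by
        rw [← hc2, ← Finset.sum_add_distrib]
        have : ∀ i : Fin n, c i * a i + c i * b i = c i * d := by
          intro i; rw [← Nat.mul_add, hab i]
        rw [Finset.sum_congr rfl (fun i _ => this i), ← Finset.sum_mul, hc1, mul_comm]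
      have h1 : ((∑ i, c i * b i : ℕ) : ℤ) = gT - d * ((k₀ : ℤ) - k) := by
        have hcast : (u : ℤ) + ((∑ i, c i * b i : ℕ) : ℤ) = (d : ℤ) * k := by
          exact_mod_cast hsum
        have hexp : (d : ℤ) * ((k₀ : ℤ) - k) = (d : ℤ) * k₀ - (d : ℤ) * k := by ring
        omega
      have hnn : (0 : ℤ) ≤ ((∑ i, c i * b i : ℕ) : ℤ) := by positivity
      have hmulnn : (0 : ℤ) ≤ (d : ℤ) * ((k₀ : ℤ) - k) := by
        have : (k : ℤ) ≤ k₀ := by exact_mod_cast hk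
        nlinarith
      have hTnn : (0 : ℤ) ≤ gT := by omega
      apply hgT_not hTnn
      have heq : gT.toNat = (∑ i, c i * b i) + d * (k₀ - k) := by
        have : ((gT.toNat : ℤ)) = ((((∑ i, c i * b i) + d * (k₀ - k) : ℕ)) : ℤ) := by
          push_cast [Nat.cast_sub hk, Int.toNat_of_nonneg hTnn]
          linarith [h1]
        exact_mod_cast this
      rw [heq]
      refine AddSubmonoid.add_mem _ ?_ ?_
      · exact (mem_closure_iff_rep b _).2 ⟨c, rfl⟩
      · obtain ⟨i1, hi1⟩ := hdb
        have : d * (k₀ - k) = (k₀ - k) • d := by simp [smul_eq_mul, mul_comm]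
        rw [this, ← hi1]
        exact AddSubmonoid.nsmul_mem _ (AddSubmonoid.subset_closure (Set.mem_range_self i1)) _
    have hwin : lam a u ≤ ΛS := window d a gS ΛS hgS_ge hΛS hu_mem hu_win
    have hfin : (k₀ : ℤ) + 1 ≤ ΛS := by exact_mod_cast le_trans hlam hwin
    have : (d : ℤ) * ((k₀ : ℤ) + 1) ≤ (d : ℤ) * ΛS :=
      mul_le_mul_of_nonneg_left hfin (by positivity)
    have hu_ge : gS + 1 ≤ (u : ℤ) := by rw [huz]; linarith
    nlinarith

lemma step1 (hd : 0 < d) (l : ℕ)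
    (hGT : gS + gT + d + 1 ≤ (d : ℤ) * ΛT)
    (hl1 : 2 * (d : ℤ) * ΛS + d ≤ d * l + 3 + 2 * gS)
    (hl2 : 2 * (d : ℤ) * ΛT + d ≤ d * l + 3 + 2 * gT) : ΛS ≤ l := by
  have hd1 : (1 : ℤ) ≤ d := by exact_mod_cast hd
  have hkey : (d : ℤ) * ΛS ≤ d * l := by linarith
  have : (ΛS : ℤ) ≤ l := le_of_mul_le_mul_left hkey (by linarith)
  exact_mod_cast this

lemma core (hd : 0 < d) (hab : ∀ i, a i + b i = d)
    (hda : ∃ i, a i = d) (hdb : ∃ i, b i = d)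
    (hgS_ge : -1 ≤ gS) (hgT_ge : -1 ≤ gT)
    (hgS_mem : ∀ m : ℕ, gS < (m : ℤ) → m ∈ AddSubmonoid.closure (Set.range a))
    (hgS_not : 0 ≤ gS → gS.toNat ∉ AddSubmonoid.closure (Set.range a))
    (hgT_mem : ∀ m : ℕ, gT < (m : ℤ) → m ∈ AddSubmonoid.closure (Set.range b))
    (hgT_not : 0 ≤ gT → gT.toNat ∉ AddSubmonoid.closure (Set.range b))
    (hΛS : ΛS = sSup {m | ∃ s : ℕ, s ∈ AddSubmonoid.closure (Set.range a) ∧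
            (s : ℤ) ≤ gS + (d : ℤ) ∧ lam a s = m})
    (hΛT : ΛT = sSup {m | ∃ t : ℕ, t ∈ AddSubmonoid.closure (Set.range b) ∧
            (t : ℤ) ≤ gT + (d : ℤ) ∧ lam b t = m})
    (l : ℕ)
    (hl1 : 2 * (d : ℤ) * ΛS + d ≤ d * l + 3 + 2 * gS)
    (hl2 : 2 * (d : ℤ) * ΛT + d ≤ d * l + 3 + 2 * gT) :
    ∀ s t : ℕ, s ∈ AddSubmonoid.closure (Set.range a) →
      t ∈ AddSubmonoid.closure (Set.range b) → s + t = d * l →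
      lam a s ≤ l ∨ lam b t ≤ l := by
  have hab' : ∀ i, b i + a i = d := fun i => by rw [add_comm]; exact hab i
  have hGS : gS + gT + d + 1 ≤ (d : ℤ) * ΛS :=
    lemG d a b gS gT ΛS hd hab hdb hgS_ge hgT_ge hgS_mem hgT_not hΛS
  have hGT : gT + gS + d + 1 ≤ (d : ℤ) * ΛT :=
    lemG d b a gT gS ΛT hd hab' hda hgT_ge hgS_ge hgT_mem hgS_not hΛT
  have hΛSl : ΛS ≤ l := step1 d gS gT ΛS ΛT hd l (by linarith) hl1 hl2
  have hΛTl : ΛT ≤ l := step1 d gT gS ΛT ΛS hd l (by linarith) hl2 hl1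
  intro s t hs ht hst
  by_contra hcon
  push_neg at hcon
  obtain ⟨hcs, hct⟩ := hcon
  have hsbig : gS + (d : ℤ) < s := by
    by_contra hle
    push_neg at hle
    exact absurd (le_trans (window d a gS ΛS hgS_ge hΛS hs hle) hΛSl) (by omega)
  have htbig : gT + (d : ℤ) < t := by
    by_contra hle
    push_neg at hle
    exact absurd (le_trans (window d b gT ΛT hgT_ge hΛT ht hle) hΛTl) (by omega)
  have hd1 : (1 : ℤ) ≤ d := by exact_mod_cast hd
  have hAs : (d : ℤ) * lam a s ≤ d * ΛS + s - gS - 1 :=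
    lemA d a gS ΛS hd hda hgS_ge hgS_mem hΛS s hs (by linarith)
  have hAt : (d : ℤ) * lam b t ≤ d * ΛT + t - gT - 1 :=
    lemA d b gT ΛT hd hdb hgT_ge hgT_mem hΛT t ht (by linarith)
  have hcs' : (l : ℤ) + 1 ≤ lam a s := by exact_mod_cast hcs
  have hct' : (l : ℤ) + 1 ≤ lam b t := by exact_mod_cast hct
  have hm1 : (d : ℤ) * ((l : ℤ) + 1) ≤ (d : ℤ) * lam a s :=
    mul_le_mul_of_nonneg_left hcs' (by positivity)
  have hm2 : (d : ℤ) * ((l : ℤ) + 1) ≤ (d : ℤ) * lam b t :=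
    mul_le_mul_of_nonneg_left hct' (by positivity)
  have hstz : (s : ℤ) + t = (d : ℤ) * l := by exact_mod_cast hst
  linarith

end Comb2
section Ideals

lemma sum_mul_ab {n : ℕ} (d : ℕ) (a b : Fin n → ℕ) (hab : ∀ i, a i + b i = d)
    (c : Fin n → ℕ) :
    (∑ i, c i * a i) + (∑ i, c i * b i) = d * (∑ i, c i) := by
  rw [← Finset.sum_add_distrib,
    Finset.sum_congr rfl (fun i _ => by rw [← Nat.mul_add, hab i] :
      ∀ i ∈ Finset.univ, c i * a i + c i * b i = c i * d),
    ← Finset.sum_mul, mul_comm]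

lemma prod_pow_monomial {K : Type*} [Field K] {n : ℕ} (a b : Fin n → ℕ) (c : Fin n → ℕ) :
    (∏ i, ((X 0 : MvPolynomial (Fin 2) K) ^ a i * X 1 ^ b i) ^ c i)
      = X 0 ^ (∑ i, c i * a i) * X 1 ^ (∑ i, c i * b i) := by
  simp_rw [mul_pow, ← pow_mul]
  rw [Finset.prod_mul_distrib, Finset.prod_pow_eq_pow_sum, Finset.prod_pow_eq_pow_sum,
    Finset.sum_congr rfl (fun i _ => mul_comm (a i) (c i) : ∀ i ∈ Finset.univ, a i * c i = c i * a i),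
    Finset.sum_congr rfl (fun i _ => mul_comm (b i) (c i) : ∀ i ∈ Finset.univ, b i * c i = c i * b i)]

lemma prod_pow_mem_pow {R : Type*} [CommRing R] (I : Ideal R) {ι : Type*} (t : Finset ι)
    (f : ι → R) (hf : ∀ i, f i ∈ I) (c : ι → ℕ) :
    (∏ i ∈ t, f i ^ c i) ∈ I ^ (∑ i ∈ t, c i) := by
  classical
  induction t using Finset.induction with
  | empty =>
    simp only [Finset.prod_empty, Finset.sum_empty, pow_zero, Ideal.one_eq_top]
    exact Submodule.mem_top
  | insert _ _ hj ih =>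
    rw [Finset.prod_insert hj, Finset.sum_insert hj, pow_add]
    exact Ideal.mul_mem_mul (Ideal.pow_mem_pow (hf _) _) ih

lemma pow_le_J {K : Type*} [Field K] {n : ℕ} (d : ℕ) (a b : Fin n → ℕ)
    (hab : ∀ i, a i + b i = d) :
    ∀ l : ℕ,
      (Ideal.span (Set.range fun i => (X 0 : MvPolynomial (Fin 2) K) ^ a i * X 1 ^ b i)) ^ l
      ≤ Ideal.span {m : MvPolynomial (Fin 2) K | ∃ s t : ℕ,
          s ∈ AddSubmonoid.closure (Set.range a) ∧ t ∈ AddSubmonoid.closure (Set.range b) ∧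
          s + t = d * l ∧ m = X 0 ^ s * X 1 ^ t} := by
  intro l
  induction l with
  | zero =>
    rw [pow_zero, Ideal.one_eq_top]
    refine top_le_iff.mpr ((Ideal.eq_top_iff_one _).2 (Ideal.subset_span ?_))
    exact ⟨0, 0, AddSubmonoid.zero_mem _, AddSubmonoid.zero_mem _, by simp, by simp⟩
  | succ lvl ih =>
    rw [pow_succ]
    refine le_trans (Ideal.mul_mono ih le_rfl) ?_
    rw [Ideal.span_mul_span', Ideal.span_le]
    rintro x hx
    rw [Set.mem_mul] at hx
    obtain ⟨m1, hm1, m2, hm2, rfl⟩ := hx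
    obtain ⟨s, t, hs, ht, hst, rfl⟩ := hm1
    obtain ⟨i, rfl⟩ := hm2
    refine Ideal.subset_span ⟨s + a i, t + b i,
      AddSubmonoid.add_mem _ hs (AddSubmonoid.subset_closure (Set.mem_range_self i)),
      AddSubmonoid.add_mem _ ht (AddSubmonoid.subset_closure (Set.mem_range_self i)),
      by rw [Nat.mul_succ, ← hst, ← hab i]; ring, by rw [pow_add, pow_add]; ring⟩

end Ideals

theorem stmt6 {K : Type*} [Field K] {r : ℕ} (hr : 1 ≤ r) (d : ℕ)
    (a b : Fin (r + 1) → ℕ) (ha0 : a 0 = 0) (hmono : StrictMono a)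
    (har : a (Fin.last r) = d) (hb : ∀ i, b i = d - a i)
    (hgcda : Finset.univ.gcd a = 1) (hgcdb : Finset.univ.gcd b = 1)
    (gS gT : ℤ) (hgS_ge : -1 ≤ gS) (hgT_ge : -1 ≤ gT)
    (hgS_mem : ∀ n : ℕ, gS < (n : ℤ) → n ∈ AddSubmonoid.closure (Set.range a))
    (hgS_not : 0 ≤ gS → gS.toNat ∉ AddSubmonoid.closure (Set.range a))
    (hgT_mem : ∀ n : ℕ, gT < (n : ℤ) → n ∈ AddSubmonoid.closure (Set.range b))
    (hgT_not : 0 ≤ gT → gT.toNat ∉ AddSubmonoid.closure (Set.range b))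
    (ΛS ΛT : ℕ)
    (hΛS : ΛS = sSup {m | ∃ s : ℕ, s ∈ AddSubmonoid.closure (Set.range a) ∧
            (s : ℤ) ≤ gS + (d : ℤ) ∧ lam a s = m})
    (hΛT : ΛT = sSup {m | ∃ t : ℕ, t ∈ AddSubmonoid.closure (Set.range b) ∧
            (t : ℤ) ≤ gT + (d : ℤ) ∧ lam b t = m}) :
    ∀ l : ℕ,
      2 * (ΛS : ℝ) + 1 - (3 + 2 * (gS : ℝ)) / (d : ℝ) ≤ (l : ℝ) →
      2 * (ΛT : ℝ) + 1 - (3 + 2 * (gT : ℝ)) / (d : ℝ) ≤ (l : ℝ) →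
      (Ideal.span (Set.range fun i => X 0 ^ a i * X 1 ^ b i) :
          Ideal (MvPolynomial (Fin 2) K)) ^ l
        = Ideal.span {m : MvPolynomial (Fin 2) K | ∃ s t : ℕ,
            s ∈ AddSubmonoid.closure (Set.range a) ∧
            t ∈ AddSubmonoid.closure (Set.range b) ∧
            s + t = d * l ∧ m = X 0 ^ s * X 1 ^ t} := by
  intro l hl1R hl2R
  have hlastpos : (0 : Fin (r + 1)) < Fin.last r := by
    rw [Fin.lt_def]
    simp; omega
  have hd : 0 < d := by
    have := hmono hlastpos
    rw [ha0, har] at this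
    exact this
  have hale : ∀ i, a i ≤ d := fun i => har ▸ hmono.monotone (Fin.le_last i)
  have hab : ∀ i, a i + b i = d := fun i => by rw [hb i]; exact Nat.add_sub_cancel' (hale i)
  have hda : ∃ i, a i = d := ⟨Fin.last r, har⟩
  have hdb : ∃ i, b i = d := ⟨0, by rw [hb 0, ha0, Nat.sub_zero]⟩
  have hblast : b (Fin.last r) = 0 := by rw [hb, har, Nat.sub_self]
  have hdR : (0 : ℝ) < d := by exact_mod_cast hd
  have hl1 : 2 * (d : ℤ) * ΛS + d ≤ d * l + 3 + 2 * gS := by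
    have h := mul_le_mul_of_nonneg_right hl1R hdR.le
    have hc : ((3 : ℝ) + 2 * (gS : ℝ)) / d * d = 3 + 2 * (gS : ℝ) :=
      div_mul_cancel₀ _ (ne_of_gt hdR)
    have hreal : 2 * (d : ℝ) * ΛS + d ≤ d * l + 3 + 2 * gS := by nlinarith [h, hc]
    exact_mod_cast hreal
  have hl2 : 2 * (d : ℤ) * ΛT + d ≤ d * l + 3 + 2 * gT := by
    have h := mul_le_mul_of_nonneg_right hl2R hdR.le
    have hc : ((3 : ℝ) + 2 * (gT : ℝ)) / d * d = 3 + 2 * (gT : ℝ) :=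
      div_mul_cancel₀ _ (ne_of_gt hdR)
    have hreal : 2 * (d : ℝ) * ΛT + d ≤ d * l + 3 + 2 * gT := by nlinarith [h, hc]
    exact_mod_cast hreal
  have hcore := core d a b gS gT ΛS ΛT hd hab hda hdb hgS_ge hgT_ge hgS_mem hgS_not
    hgT_mem hgT_not hΛS hΛT l hl1 hl2
  refine le_antisymm (pow_le_J d a b hab l) ?_
  rw [Ideal.span_le]
  rintro m ⟨s, t, hs, ht, hst, rfl⟩
  obtain ⟨c, hcl, hca⟩ : ∃ c : Fin (r + 1) → ℕ, (∑ i, c i) = l ∧ (∑ i, c i * a i) = s := by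
    rcases hcore s t hs ht hst with h | h
    · obtain ⟨c₀, h1, h2⟩ := lam_spec a hs
      refine ⟨c₀ + (Pi.single 0 (l - lam a s) : Fin (r + 1) → ℕ), ?_, ?_⟩
      · simp only [Pi.add_apply]
        rw [Finset.sum_add_distrib, h1]
        have : (∑ i, (Pi.single 0 (l - lam a s) : Fin (r + 1) → ℕ) i) = l - lam a s := by
          simp [Pi.single_apply]
        rw [this]
        omega
      · have hsplit : (∑ i, (c₀ + (Pi.single 0 (l - lam a s) : Fin (r + 1) → ℕ)) i * a i)
            = (∑ i, c₀ i * a i) + (∑ i, (Pi.single 0 (l - lam a s) : Fin (r + 1) → ℕ) i * a i) := by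
          simp [add_mul, Finset.sum_add_distrib]
        rw [hsplit, h2]
        have : (∑ i, (Pi.single 0 (l - lam a s) : Fin (r + 1) → ℕ) i * a i)
            = (l - lam a s) * a 0 := by simp [Pi.single_apply]
        rw [this, ha0]
        omega
    · obtain ⟨c₀, h1, h2⟩ := lam_spec b ht
      set c : Fin (r + 1) → ℕ := c₀ + (Pi.single (Fin.last r) (l - lam b t) : Fin (r + 1) → ℕ)
        with hcdef
      have hsumc : (∑ i, c i) = l := by
        simp only [hcdef, Pi.add_apply]
        rw [Finset.sum_add_distrib, h1]
        have : (∑ i, (Pi.single (Fin.last r) (l - lam b t) : Fin (r + 1) → ℕ) i)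
            = l - lam b t := by simp [Pi.single_apply]
        rw [this]
        omega
      have hcb : (∑ i, c i * b i) = t := by
        have hsplit : (∑ i, c i * b i)
            = (∑ i, c₀ i * b i)
              + (∑ i, (Pi.single (Fin.last r) (l - lam b t) : Fin (r + 1) → ℕ) i * b i) := by
          simp [hcdef, add_mul, Finset.sum_add_distrib]
        rw [hsplit, h2]
        have : (∑ i, (Pi.single (Fin.last r) (l - lam b t) : Fin (r + 1) → ℕ) i * b i)
            = (l - lam b t) * b (Fin.last r) := by simp [Pi.single_apply]
        rw [this, hblast]
        omega
      have hca : (∑ i, c i * a i) = s := by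
        have := sum_mul_ab d a b hab c
        rw [hsumc, hcb] at this
        omega
      exact ⟨c, hsumc, hca⟩
  have hcb : (∑ i, c i * b i) = t := by
    have := sum_mul_ab d a b hab c
    rw [hcl, hca] at this
    omega
  rw [← hca, ← hcb, ← prod_pow_monomial a b c]
  have hmem := prod_pow_mem_pow
    (Ideal.span (Set.range fun i => (X 0 : MvPolynomial (Fin 2) K) ^ a i * X 1 ^ b i))
    Finset.univ (fun i => (X 0 : MvPolynomial (Fin 2) K) ^ a i * X 1 ^ b i)
    (fun i => Ideal.subset_span (Set.mem_range_self i)) c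
  rwa [hcl] at hmem
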